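/- arXiv:1203.3200 — 2 statements merged into one kernel-verified Lean document; each statement's English description precedes it below -/
import Mathlib

section
/- Let F be strictly convex, let S be convex, let J ≠ ∅, and let Θ_j be strictly convex for every j ∈ J. Suppose that for every x ∈ S the projection Π_F(x; Θ_j) is nonempty for all j ∈ J. Then the set of minimizers over S of the function T₁(x) := max{T_F(x; Θ_j) : j ∈ J} has at most one element if and only if ⋂_{j∈J} (Θ_j ∩ S) contains at most one point. -/
open Set Pointwise Filter Topology Bornology Function

variable {X : Type*} [NormedAddCommGroup X] [NormedSpace ℝ X]

/-- The Minkowski gauge of `F`: `ρ_F(x) = inf {t ≥ 0 : x ∈ t • F}`. -/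
noncomputable def rhoF (F : Set X) (x : X) : ℝ :=
  sInf {t : ℝ | 0 ≤ t ∧ x ∈ t • F}

/-- The maximal time function `C_F(x; Q) = sup {ρ_F(q - x) : q ∈ Q}`. -/
noncomputable def maxTime (F Q : Set X) (x : X) : ℝ :=
  sSup ((fun q => rhoF F (q - x)) '' Q)

/-- The minimal time function `T_F(x; Θ) = inf {ρ_F(q - x) : q ∈ Θ}`. -/
noncomputable def minTime (F Θ : Set X) (x : X) : ℝ :=
  sInf ((fun q => rhoF F (q - x)) '' Θ)

/-- The projection `Π_F(x; Θ) = {u ∈ Θ : ρ_F(u - x) = T_F(x; Θ)}`. -/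
def nearProj (F Θ : Set X) (x : X) : Set X :=
  {u ∈ Θ | rhoF F (u - x) = minTime F Θ x}

lemma rhoF_eq_gauge (F : Set X) (h0 : (0 : X) ∈ F) : rhoF F = gauge F := by
  funext x
  rcases eq_or_ne x 0 with rfl | hx
  · rw [gauge_zero]
    have hmem : (0:ℝ) ∈ {t : ℝ | 0 ≤ t ∧ (0:X) ∈ t • F} := by
      refine ⟨le_refl 0, ?_⟩
      rw [zero_smul_set ⟨0, h0⟩]
      exact Set.zero_mem_zero
    exact le_antisymm (csInf_le ⟨0, fun t ht => ht.1⟩ hmem) (le_csInf ⟨0, hmem⟩ fun t ht => ht.1)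
  · unfold rhoF gauge
    congr 1
    ext t
    simp only [Set.mem_setOf_eq, Set.mem_sep_iff, Set.mem_Ioi]
    constructor
    · rintro ⟨ht, hm⟩
      rcases ht.lt_or_eq with h | h
      · exact ⟨h, hm⟩
      · exfalso; rw [← h, zero_smul_set ⟨0, h0⟩] at hm; exact hx hm
    · rintro ⟨ht, hm⟩; exact ⟨ht.le, hm⟩

/-- Corollary 3.6 (ii). -/
theorem stmt12 {κ : Type*} (F : Set X) (J : Finset κ) (Θ : κ → Set X) (S : Set X)
    (hFc : IsClosed F) (hFb : IsBounded F) (hFconv : Convex ℝ F)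
    (hF0 : (0 : X) ∈ interior F) (hFs : StrictConvex ℝ F)
    (hΘne : ∀ j ∈ J, (Θ j).Nonempty) (hΘc : ∀ j ∈ J, IsClosed (Θ j))
    (hΘs : ∀ j ∈ J, StrictConvex ℝ (Θ j))
    (hSne : S.Nonempty) (hSc : IsClosed S) (hSconv : Convex ℝ S)
    (hJ : J.Nonempty)
    (hPi : ∀ x ∈ S, ∀ j ∈ J, (nearProj F (Θ j) x).Nonempty) :
    {x ∈ S | ∀ y ∈ S,
      sSup ((fun j => minTime F (Θ j) x) '' ↑J) ≤
        sSup ((fun j => minTime F (Θ j) y) '' ↑J)}.Subsingleton ↔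
      (⋂ j ∈ J, (Θ j ∩ S)).Subsingleton := by
  have hF0' : (0 : X) ∈ F := interior_subset hF0
  have hFnhds : F ∈ 𝓝 (0 : X) := mem_interior_iff_mem_nhds.1 hF0
  have habs : Absorbent ℝ F := absorbent_nhds_zero hFnhds
  have hrho : rhoF F = gauge F := rhoF_eq_gauge F hF0'
  obtain ⟨R0, hFR0⟩ := hFb.subset_closedBall 0
  set R : ℝ := max R0 1 with hRdef
  have hR : 0 < R := lt_of_lt_of_le one_pos (le_max_right _ _)
  have hFR : F ⊆ Metric.closedBall 0 R :=
    hFR0.trans (Metric.closedBall_subset_closedBall (le_max_left _ _))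
  have hlow : ∀ x : X, ‖x‖ / R ≤ gauge F x := fun x =>
    le_gauge_of_subset_closedBall habs hR.le hFR
  have hmem_of_le_one : ∀ x : X, gauge F x ≤ 1 → x ∈ F := fun x hx => by
    rw [← hFc.closure_eq]
    exact (gauge_le_one_iff_mem_closure hFconv hFnhds).1 hx
  -- strict midpoint inequality for the gauge
  have hstrict : ∀ (a b : X) (V : ℝ), a ≠ b → gauge F a = V → gauge F b = V → 0 < V →
      gauge F ((1/2 : ℝ) • a + (1/2 : ℝ) • b) < V := by
    intro a b V hab ha hb hV
    have hVinv : (0:ℝ) ≤ V⁻¹ := (inv_pos.2 hV).le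
    have hga : gauge F (V⁻¹ • a) = 1 := by
      rw [gauge_smul_of_nonneg hVinv, smul_eq_mul, ha, inv_mul_cancel₀ hV.ne']
    have hgb : gauge F (V⁻¹ • b) = 1 := by
      rw [gauge_smul_of_nonneg hVinv, smul_eq_mul, hb, inv_mul_cancel₀ hV.ne']
    have hua : V⁻¹ • a ∈ F := hmem_of_le_one _ hga.le
    have hub : V⁻¹ • b ∈ F := hmem_of_le_one _ hgb.le
    have hne : V⁻¹ • a ≠ V⁻¹ • b := fun h =>
      hab (smul_right_injective X (inv_ne_zero hV.ne') h)
    have hmid : (1/2 : ℝ) • (V⁻¹ • a) + (1/2 : ℝ) • (V⁻¹ • b) ∈ interior F :=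
      hFs hua hub hne (by norm_num) (by norm_num) (by norm_num)
    have hlt : gauge F ((1/2 : ℝ) • (V⁻¹ • a) + (1/2 : ℝ) • (V⁻¹ • b)) < 1 :=
      interior_subset_gauge_lt_one F hmid
    have key : (1/2 : ℝ) • a + (1/2 : ℝ) • b
        = V • ((1/2 : ℝ) • (V⁻¹ • a) + (1/2 : ℝ) • (V⁻¹ • b)) := by
      match_scalars <;> field_simp
    rw [key, gauge_smul_of_nonneg hV.le, smul_eq_mul]
    calc V * gauge F ((1/2 : ℝ) • (V⁻¹ • a) + (1/2 : ℝ) • (V⁻¹ • b)) < V * 1 :=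
          (mul_lt_mul_iff_right₀ hV).2 hlt
      _ = V := mul_one V
  -- basic facts about minTime
  have hmt_le : ∀ (Θ' : Set X) (x q : X), q ∈ Θ' → minTime F Θ' x ≤ rhoF F (q - x) := by
    intro Θ' x q hq
    exact csInf_le ⟨0, fun t ht => by
      obtain ⟨p, _, rfl⟩ := ht
      rw [hrho]; exact gauge_nonneg _⟩ ⟨q, hq, rfl⟩
  have hmt_nonneg : ∀ (Θ' : Set X) (x : X), Θ'.Nonempty → 0 ≤ minTime F Θ' x := by
    intro Θ' x hne
    refine le_csInf (hne.image _) ?_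
    rintro t ⟨p, _, rfl⟩
    rw [hrho]; exact gauge_nonneg _
  have hmt_zero : ∀ (Θ' : Set X) (x : X), x ∈ Θ' → minTime F Θ' x = 0 := by
    intro Θ' x hx
    refine le_antisymm ?_ (hmt_nonneg Θ' x ⟨x, hx⟩)
    have := hmt_le Θ' x x hx
    rwa [sub_self, hrho, gauge_zero] at this
  have hmt_mem : ∀ (Θ' : Set X) (x : X), IsClosed Θ' → Θ'.Nonempty →
      minTime F Θ' x = 0 → x ∈ Θ' := by
    intro Θ' x hc hne h0
    rw [← hc.closure_eq]
    rw [Metric.mem_closure_iff]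
    intro ε hε
    have hεR : 0 < ε / R := div_pos hε hR
    have hlt : sInf ((fun q => rhoF F (q - x)) '' Θ') < ε / R := by
      rw [show sInf ((fun q => rhoF F (q - x)) '' Θ') = minTime F Θ' x from rfl, h0]; exact hεR
    obtain ⟨t, ⟨q, hq, rfl⟩, htlt⟩ := exists_lt_of_csInf_lt (hne.image _) hlt
    refine ⟨q, hq, ?_⟩
    have h1 : ‖q - x‖ / R ≤ gauge F (q - x) := hlow _
    rw [hrho] at htlt
    have h2 : ‖q - x‖ / R < ε / R := lt_of_le_of_lt h1 htlt
    have := (div_lt_div_iff_of_pos_right hR).1 h2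
    rwa [dist_comm, dist_eq_norm]
  -- facts about the sup over J
  set Tsup : X → ℝ := fun x => sSup ((fun j => minTime F (Θ j) x) '' ↑J) with hTdef
  have himfin : ∀ x : X, ((fun j => minTime F (Θ j) x) '' ↑J).Finite :=
    fun x => J.finite_toSet.image _
  have himne : ∀ x : X, ((fun j => minTime F (Θ j) x) '' ↑J).Nonempty :=
    fun x => (hJ.to_set).image _
  have hle_T : ∀ (x : X), ∀ j ∈ J, minTime F (Θ j) x ≤ Tsup x := by
    intro x j hj
    exact le_csSup (himfin x).bddAbove ⟨j, hj, rfl⟩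
  have hT_le : ∀ (x : X) (c : ℝ), (∀ j ∈ J, minTime F (Θ j) x ≤ c) → Tsup x ≤ c := by
    intro x c hc
    refine csSup_le (himne x) ?_
    rintro t ⟨j, hj, rfl⟩; exact hc j hj
  have hT_lt : ∀ (x : X) (c : ℝ), (∀ j ∈ J, minTime F (Θ j) x < c) → Tsup x < c := by
    intro x c hc
    rw [(himfin x).csSup_lt_iff (himne x)]
    rintro t ⟨j, hj, rfl⟩; exact hc j hj
  have hT_nonneg : ∀ x : X, 0 ≤ Tsup x := by
    intro x
    obtain ⟨j, hj⟩ := hJ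
    exact le_trans (hmt_nonneg _ x (hΘne j hj)) (hle_T x j hj)
  constructor
  · -- easy direction: intersection ⊆ minimizer set
    intro hmin
    refine hmin.anti ?_
    intro x hx
    simp only [Set.mem_iInter] at hx
    obtain ⟨j0, hj0⟩ := hJ
    have hxS : x ∈ S := (hx j0 hj0).2
    refine ⟨hxS, fun y hy => ?_⟩
    have hx0 : Tsup x ≤ 0 := hT_le x 0 fun j hj => le_of_eq (hmt_zero _ x (hx j hj).1)
    exact le_trans hx0 (hT_nonneg y)
  · -- hard direction
    intro hint
    intro x hx y hy
    by_contra hne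
    obtain ⟨hxS, hxmin⟩ := hx
    obtain ⟨hyS, hymin⟩ := hy
    set V : ℝ := Tsup x with hVdef
    have hVy : Tsup y = V := le_antisymm (hymin x hxS) (hxmin y hyS)
    rcases (hT_nonneg x).eq_or_lt with hV0 | hVpos
    · -- V = 0 : both x and y lie in the intersection
      have hmemI : ∀ z : X, z ∈ S → Tsup z = 0 → z ∈ ⋂ j ∈ J, (Θ j ∩ S) := by
        intro z hzS hz0
        simp only [Set.mem_iInter]
        intro j hj
        refine ⟨?_, hzS⟩
        refine hmt_mem _ z (hΘc j hj) (hΘne j hj) ?_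
        exact le_antisymm (hz0 ▸ hle_T z j hj) (hmt_nonneg _ z (hΘne j hj))
      exact hne (hint (hmemI x hxS hV0.symm) (hmemI y hyS (hVy.trans hV0.symm)))
    · -- V > 0 : strict convexity contradiction at the midpoint
      set z : X := (1/2 : ℝ) • x + (1/2 : ℝ) • y with hzdef
      have hzS : z ∈ S := hSconv hxS hyS (by norm_num) (by norm_num) (by norm_num)
      have hkey : ∀ j ∈ J, minTime F (Θ j) z < V := by
        intro j hj
        obtain ⟨u, hu, huproj⟩ := hPi x hxS j hj
        obtain ⟨v, hv, hvproj⟩ := hPi y hyS j hj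
        have hVx : rhoF F (u - x) ≤ V := huproj ▸ hle_T x j hj
        have hVy' : rhoF F (v - y) ≤ V := by
          rw [hvproj, ← hVy]; exact hle_T y j hj
        have hmconv : (1/2 : ℝ) • u + (1/2 : ℝ) • v ∈ Θ j :=
          (hΘs j hj).convex hu hv (by norm_num) (by norm_num) (by norm_num)
        have hmz : (1/2 : ℝ) • u + (1/2 : ℝ) • v - z
            = (1/2 : ℝ) • (u - x) + (1/2 : ℝ) • (v - y) := by
          rw [hzdef]; module
        rcases lt_or_ge (rhoF F (u - x)) V with hlt | hge
        · -- one of the projections is strictly closer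
          refine lt_of_le_of_lt (hmt_le (Θ j) z _ hmconv) ?_
          rw [hmz, hrho]
          calc gauge F ((1/2 : ℝ) • (u - x) + (1/2 : ℝ) • (v - y))
              ≤ gauge F ((1/2 : ℝ) • (u - x)) + gauge F ((1/2 : ℝ) • (v - y)) :=
                gauge_add_le hFconv habs _ _
            _ = (1/2 : ℝ) * gauge F (u - x) + (1/2 : ℝ) * gauge F (v - y) := by
                rw [gauge_smul_of_nonneg (by norm_num : (0:ℝ) ≤ 1/2),
                  gauge_smul_of_nonneg (by norm_num : (0:ℝ) ≤ 1/2), smul_eq_mul, smul_eq_mul]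
            _ < (1/2 : ℝ) * V + (1/2 : ℝ) * V := by
                rw [hrho] at hlt hVy'
                have h2 : (0:ℝ) < 1/2 := by norm_num
                rcases hVy'.lt_or_eq with h | h
                · exact add_lt_add ((mul_lt_mul_iff_right₀ h2).2 hlt) ((mul_lt_mul_iff_right₀ h2).2 h)
                · rw [h]; exact add_lt_add_left ((mul_lt_mul_iff_right₀ h2).2 hlt) _
            _ = V := by ring
        rcases lt_or_ge (rhoF F (v - y)) V with hlt' | hge'
        · refine lt_of_le_of_lt (hmt_le (Θ j) z _ hmconv) ?_
          rw [hmz, hrho]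
          calc gauge F ((1/2 : ℝ) • (u - x) + (1/2 : ℝ) • (v - y))
              ≤ gauge F ((1/2 : ℝ) • (u - x)) + gauge F ((1/2 : ℝ) • (v - y)) :=
                gauge_add_le hFconv habs _ _
            _ = (1/2 : ℝ) * gauge F (u - x) + (1/2 : ℝ) * gauge F (v - y) := by
                rw [gauge_smul_of_nonneg (by norm_num : (0:ℝ) ≤ 1/2),
                  gauge_smul_of_nonneg (by norm_num : (0:ℝ) ≤ 1/2), smul_eq_mul, smul_eq_mul]
            _ < (1/2 : ℝ) * V + (1/2 : ℝ) * V := by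
                rw [hrho] at hlt' hge
                have h2 : (0:ℝ) < 1/2 := by norm_num
                have hEq : gauge F (u - x) = V := le_antisymm (hrho ▸ hVx) hge
                rw [hEq]
                exact add_lt_add_right ((mul_lt_mul_iff_right₀ h2).2 hlt') _
            _ = V := by ring
        -- both projections at exact gauge distance V
        have hEqu : gauge F (u - x) = V := le_antisymm (hrho ▸ hVx) (hrho ▸ hge)
        have hEqv : gauge F (v - y) = V := le_antisymm (hrho ▸ hVy') (hrho ▸ hge')
        rcases eq_or_ne (u - x) (v - y) with heq | hneq
        · -- identical displacement vectors: use strict convexity of Θ j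
          have huv : u ≠ v := by
            intro h
            apply hne
            have h2 : u - x = u - y := by rw [heq, h]
            exact sub_right_injective h2
          have hmid : (1/2 : ℝ) • u + (1/2 : ℝ) • v ∈ interior (Θ j) :=
            hΘs j hj hu hv huv (by norm_num) (by norm_num) (by norm_num)
          have hmz' : (1/2 : ℝ) • u + (1/2 : ℝ) • v - z = u - x := by
            rw [hmz, ← heq]; module
          have ha0 : u - x ≠ 0 := by
            intro h
            rw [h, gauge_zero] at hEqu
            exact hVpos.ne hEqu
          obtain ⟨δ, hδ, hball⟩ := Metric.isOpen_iff.1 isOpen_interior _ hmid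
          set ε : ℝ := min (1/2) (δ / (2 * ‖u - x‖)) with hεdef
          have hnorm : 0 < ‖u - x‖ := norm_pos_iff.2 ha0
          have hε : 0 < ε := lt_min (by norm_num) (div_pos hδ (by positivity))
          have hε1 : ε < 1 := lt_of_le_of_lt (min_le_left _ _) (by norm_num)
          have hw : (1/2 : ℝ) • u + (1/2 : ℝ) • v - ε • (u - x) ∈ Θ j := by
            refine interior_subset (hball ?_)
            rw [Metric.mem_ball, dist_eq_norm]
            have hrw : (1/2 : ℝ) • u + (1/2 : ℝ) • v - ε • (u - x)
                - ((1/2 : ℝ) • u + (1/2 : ℝ) • v) = -(ε • (u - x)) := by module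
            rw [hrw, norm_neg, norm_smul, Real.norm_eq_abs, abs_of_pos hε]
            calc ε * ‖u - x‖ ≤ δ / (2 * ‖u - x‖) * ‖u - x‖ :=
                  mul_le_mul_of_nonneg_right (min_le_right _ _) hnorm.le
              _ = δ / 2 := by field_simp
              _ < δ := by linarith
          refine lt_of_le_of_lt (hmt_le (Θ j) z _ hw) ?_
          have hwz : (1/2 : ℝ) • u + (1/2 : ℝ) • v - ε • (u - x) - z
              = (1 - ε) • (u - x) := by
            rw [sub_right_comm, hmz']; module
          rw [hwz, hrho, gauge_smul_of_nonneg (by linarith : (0:ℝ) ≤ 1 - ε), smul_eq_mul, hEqu]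
          nlinarith
        · -- distinct displacement vectors: use strict convexity of F
          refine lt_of_le_of_lt (hmt_le (Θ j) z _ hmconv) ?_
          rw [hmz, hrho]
          exact hstrict _ _ V hneq hEqu hEqv hVpos
      have hcontra : Tsup z < V := hT_lt z V hkey
      exact absurd (hxmin z hzS) (not_le.2 hcontra)
end

section
/- Suppose F is strictly convex and S is a nonempty, closed, convex subset of X. For any finite collection of points a_1, …, a_m ∈ X (m ≥ 1), the problem of minimizing x ↦ max{ρ_F(a_i − x) : i = 1, …, m} over S has at most one optimal solution. If additionally X is a reflexive Banach space or S is compact, then this problem has exactly one optimal solution. -/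
open Set Pointwise Filter Topology Bornology Function

variable {X : Type*} [NormedAddCommGroup X] [NormedSpace ℝ X]

/-- A normed space is reflexive if the canonical embedding into its double dual is surjective. -/
def IsReflexiveSpace (Y : Type*) [NormedAddCommGroup Y] [NormedSpace ℝ Y] : Prop :=
  Function.Surjective (NormedSpace.inclusionInDoubleDual ℝ Y)

section Aux

open NormedSpace

lemma rho_eq {F : Set X} (hne : F.Nonempty) (x : X) : rhoF F x = gauge F x := by
  rcases eq_or_ne x 0 with rfl | hx
  · rw [gauge_zero]
    refine le_antisymm (csInf_le ⟨0, fun t ht => ht.1⟩ ?_) (le_csInf ⟨0, ?_⟩ fun t ht => ht.1)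
    all_goals exact ⟨le_rfl, by rw [zero_smul_set hne]; exact rfl⟩
  · rw [rhoF, gauge_def]
    congr 1
    ext t
    simp only [Set.mem_setOf_eq, Set.mem_sep_iff, Set.mem_Ioi]
    constructor
    · rintro ⟨ht0, htF⟩
      rcases ht0.lt_or_eq with h | rfl
      · exact ⟨h, htF⟩
      · rw [zero_smul_set hne] at htF
        exact absurd htF hx
    · rintro ⟨ht0, htF⟩
      exact ⟨ht0.le, htF⟩

lemma gauge_combo {F : Set X} (hconv : Convex ℝ F) (habs : Absorbent ℝ F)
    {u w : X} {α β : ℝ} (hα : 0 ≤ α) (hβ : 0 ≤ β) :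
    gauge F (α • u + β • w) ≤ α * gauge F u + β * gauge F w := by
  calc gauge F (α • u + β • w) ≤ gauge F (α • u) + gauge F (β • w) := gauge_add_le hconv habs _ _
  _ = α * gauge F u + β * gauge F w := by
      rw [gauge_smul_of_nonneg hα, gauge_smul_of_nonneg hβ, smul_eq_mul, smul_eq_mul]

/-- The canonical map from the weak space to the weak-star double dual. -/
noncomputable def phiW : WeakSpace ℝ X → WeakDual ℝ (StrongDual ℝ X) :=
  fun x => ((inclusionInDoubleDual ℝ X ((toWeakSpace ℝ X).symm x)).toWeakDual)

lemma phiW_inducing : Topology.IsInducing (phiW (X := X)) :=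
  ⟨(induced_compose (f := phiW (X := X))
    (g := fun (φ : WeakDual ℝ (StrongDual ℝ X)) (y : StrongDual ℝ X) => φ y)).symm⟩

lemma phiW_injective : Function.Injective (phiW (X := X)) := by
  intro x y h
  have h2 := StrongDual.toWeakDual.injective h
  exact (toWeakSpace ℝ X).symm.injective ((inclusionInDoubleDualLi ℝ (E := X)).injective h2)

/-- In a reflexive space, closed balls are weakly compact (via Banach–Alaoglu). -/
lemma isCompact_weak_closedBall (hrefl : IsReflexiveSpace X) (R : ℝ) :
    IsCompact (toWeakSpace ℝ X '' (Metric.closedBall (0 : X) R)) := by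
  rw [(Topology.IsEmbedding.mk phiW_inducing phiW_injective).isCompact_iff]
  have himg : phiW '' (toWeakSpace ℝ X '' (Metric.closedBall (0 : X) R))
      = WeakDual.toStrongDual ⁻¹'
          Metric.closedBall (0 : StrongDual ℝ (StrongDual ℝ X)) R := by
    ext ψ
    simp only [Set.mem_image, Set.mem_preimage, Metric.mem_closedBall, dist_zero_right]
    constructor
    · rintro ⟨y, ⟨x, hx, rfl⟩, rfl⟩
      have h1 : WeakDual.toStrongDual (phiW (toWeakSpace ℝ X x))
          = inclusionInDoubleDual ℝ X x := rfl
      have hn : ‖inclusionInDoubleDual ℝ X x‖ = ‖x‖ :=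
        (inclusionInDoubleDualLi ℝ (E := X)).norm_map x
      rw [h1]; refine (dist_zero_right (inclusionInDoubleDual ℝ X x)).le.trans ?_; rw [hn]
      simpa [dist_zero_right] using hx
    · intro hψ
      obtain ⟨x, hx⟩ := hrefl (WeakDual.toStrongDual ψ)
      refine ⟨toWeakSpace ℝ X x, ⟨x, ?_, rfl⟩, ?_⟩
      · have h2 : ‖x‖ = ‖(inclusionInDoubleDual ℝ X) x‖ :=
          ((inclusionInDoubleDualLi ℝ (E := X)).norm_map x).symm
        rw [h2, hx]; exact (dist_zero_right (WeakDual.toStrongDual ψ)).symm.le.trans hψ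
      · have h1 : phiW (toWeakSpace ℝ X x)
            = StrongDual.toWeakDual (inclusionInDoubleDual ℝ X x) := rfl
        rw [h1, hx]
        rfl
  rw [himg]
  exact WeakDual.isCompact_closedBall (𝕜 := ℝ) 0 R

/-- Mazur: closed convex sets are weakly closed. -/
lemma weakly_closed_of_closed_convex {C : Set X} (hC : IsClosed C) (hCc : Convex ℝ C) :
    IsClosed (toWeakSpace ℝ X '' C) := by
  have h := hCc.toWeakSpace_closure (𝕜 := ℝ)
  rw [hC.closure_eq] at h
  rw [h]; exact isClosed_closure

/-- A nonnegative continuous quasiconvex function attains its minimum on a nonempty closed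
bounded convex subset of a reflexive space. -/
lemma exists_minOn_reflexive (hrefl : IsReflexiveSpace X) {K : Set X} (hKne : K.Nonempty)
    (hKc : IsClosed K) (hKconv : Convex ℝ K) {R : ℝ} (hKb : K ⊆ Metric.closedBall 0 R)
    {g : X → ℝ} (hgc : Continuous g) (hg0 : ∀ x, 0 ≤ g x)
    (hglev : ∀ t : ℝ, Convex ℝ {x | g x ≤ t}) :
    ∃ x ∈ K, ∀ y ∈ K, g x ≤ g y := by
  set ι := sInf (g '' K) with hι
  have hbdd : BddBelow (g '' K) := ⟨0, by rintro _ ⟨x, hx, rfl⟩; exact hg0 x⟩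
  have hAne : (g '' K).Nonempty := hKne.image g
  set D : ℕ → Set X := fun n => K ∩ {x | g x ≤ ι + 1 / ((n : ℝ) + 1)} with hD
  have hDne : ∀ n, (D n).Nonempty := by
    intro n
    obtain ⟨-, ⟨x, hx, rfl⟩, hlt⟩ :=
      Real.lt_sInf_add_pos hAne (by positivity : (0:ℝ) < 1 / ((n : ℝ) + 1))
    exact ⟨x, hx, hlt.le⟩
  have hDc : ∀ n, IsClosed (D n) := fun n => hKc.inter (isClosed_le hgc continuous_const)
  have hDconv : ∀ n, Convex ℝ (D n) := fun n => hKconv.inter (hglev _)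
  set t : ℕ → Set (WeakSpace ℝ X) := fun n => toWeakSpace ℝ X '' D n with ht
  have htc : ∀ n, IsClosed (t n) := fun n => weakly_closed_of_closed_convex (hDc n) (hDconv n)
  have htcomp : IsCompact (t 0) :=
    ((isCompact_weak_closedBall hrefl R).of_isClosed_subset (htc 0)
      (Set.image_mono fun x hx => hKb hx.1))
  have hmono : ∀ n, t (n + 1) ⊆ t n := by
    intro n
    apply Set.image_mono
    rintro x ⟨hxK, hxg⟩
    have h1 : (0:ℝ) < (n : ℝ) + 1 := by positivity
    have h2 : 1 / ((n : ℝ) + 1 + 1) ≤ 1 / ((n : ℝ) + 1) :=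
      one_div_le_one_div_of_le h1 (by linarith)
    refine ⟨hxK, ?_⟩
    simp only [Set.mem_setOf_eq] at hxg ⊢
    push_cast at hxg
    linarith
  obtain ⟨y, hy⟩ := IsCompact.nonempty_iInter_of_sequence_nonempty_isCompact_isClosed t hmono
    (fun n => (hDne n).image _) htcomp htc
  set x := (toWeakSpace ℝ X).symm y with hxdef
  have hxD : ∀ n, x ∈ D n := by
    intro n
    obtain ⟨z, hz, hzy⟩ := Set.mem_iInter.mp hy n
    rwa [show z = x from by rw [hxdef, ← hzy, LinearEquiv.symm_apply_apply]] at hz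
  refine ⟨x, (hxD 0).1, fun z hz => ?_⟩
  have h1 : g x ≤ ι := by
    by_contra h
    obtain ⟨n, hn⟩ := exists_nat_one_div_lt (sub_pos.mpr (lt_of_not_ge h))
    have h2 := (hxD n).2
    simp only [Set.mem_setOf_eq] at h2
    linarith
  exact h1.trans (csInf_le hbdd ⟨z, hz, rfl⟩)

end Aux

/-- Corollary 3.7. -/
theorem stmt13 (F : Set X)
    (hFc : IsClosed F) (hFb : IsBounded F) (hFconv : Convex ℝ F)
    (hF0 : (0 : X) ∈ interior F) (hFs : StrictConvex ℝ F)
    (S : Set X) (hSne : S.Nonempty) (hSc : IsClosed S) (hSconv : Convex ℝ S)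
    (m : ℕ) (hm : 1 ≤ m) (a : Fin m → X) :
    {x ∈ S | ∀ y ∈ S,
      sSup (Set.range fun i => rhoF F (a i - x)) ≤
        sSup (Set.range fun i => rhoF F (a i - y))}.Subsingleton ∧
    (((CompleteSpace X ∧ IsReflexiveSpace X) ∨ IsCompact S) →
      ∃! x : X, x ∈ S ∧ ∀ y ∈ S,
        sSup (Set.range fun i => rhoF F (a i - x)) ≤
          sSup (Set.range fun i => rhoF F (a i - y))) := by
  have hne : F.Nonempty := ⟨0, interior_subset hF0⟩
  have hFnhds : F ∈ 𝓝 (0 : X) := mem_interior_iff_mem_nhds.mp hF0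
  have habs : Absorbent ℝ F := absorbent_nhds_zero hFnhds
  have hvnb : Bornology.IsVonNBounded ℝ F := NormedSpace.isVonNBounded_of_isBounded _ hFb
  haveI : Nonempty (Fin m) := Fin.pos_iff_nonempty.mp hm
  set g : X → ℝ := fun x => sSup (Set.range fun i => gauge F (a i - x)) with hgdef
  have hgoal : ∀ x : X, sSup (Set.range fun i => rhoF F (a i - x)) = g x := by
    intro x; simp only [hgdef, rho_eq hne]
  simp only [hgoal]
  have hgsup : ∀ x, g x = Finset.univ.sup' Finset.univ_nonempty (fun i => gauge F (a i - x)) := by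
    intro x
    rw [Finset.sup'_eq_csSup_image, Finset.coe_univ, Set.image_univ]
  have hgle : ∀ (x : X) i, gauge F (a i - x) ≤ g x := fun x i => by
    rw [hgsup]; exact Finset.le_sup' (fun i => gauge F (a i - x)) (Finset.mem_univ i)
  have hgex : ∀ x : X, ∃ i, g x = gauge F (a i - x) := by
    intro x
    obtain ⟨i, -, h⟩ := Finset.exists_mem_eq_sup' Finset.univ_nonempty
      (fun i => gauge F (a i - x))
    exact ⟨i, by rw [hgsup]; exact h⟩
  have hgle' : ∀ (x : X) (t : ℝ), (∀ i, gauge F (a i - x) ≤ t) → g x ≤ t := fun x t h => by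
    rw [hgsup]; exact Finset.sup'_le _ _ fun i _ => h i
  have hg0 : ∀ x, 0 ≤ g x := fun x => le_trans (gauge_nonneg _) (hgle x ⟨0, hm⟩)
  have hcomb : ∀ (b x y : X) (α β : ℝ), α + β = 1 →
      b - (α • x + β • y) = α • (b - x) + β • (b - y) := by
    intro b x y α β hab
    calc b - (α • x + β • y) = (α + β) • b - (α • x + β • y) := by rw [hab, one_smul]
      _ = α • (b - x) + β • (b - y) := by rw [add_smul, smul_sub, smul_sub]; abel
  have hglev : ∀ t : ℝ, Convex ℝ {x | g x ≤ t} := by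
    intro t x hx y hy α β hα hβ hab
    simp only [Set.mem_setOf_eq] at hx hy ⊢
    refine hgle' _ _ fun i => ?_
    rw [hcomb (a i) x y α β hab]
    calc gauge F (α • (a i - x) + β • (a i - y))
        ≤ α * gauge F (a i - x) + β * gauge F (a i - y) := gauge_combo hFconv habs hα hβ
      _ ≤ α * t + β * t :=
          add_le_add (mul_le_mul_of_nonneg_left ((hgle x i).trans hx) hα)
            (mul_le_mul_of_nonneg_left ((hgle y i).trans hy) hβ)
      _ = t := by rw [← add_mul, hab, one_mul]
  have hgcont : Continuous g := by
    have heq : g = fun x => Finset.univ.sup' Finset.univ_nonempty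
        (fun i => gauge F (a i - x)) := funext hgsup
    rw [heq]
    exact Continuous.finset_sup'_apply Finset.univ_nonempty fun i _ =>
      (continuous_gauge hFconv hFnhds).comp (continuous_const.sub continuous_id)
  -- uniqueness
  have huniq : ({x ∈ S | ∀ y ∈ S, g x ≤ g y} : Set X).Subsingleton := by
    rintro x₁ ⟨hx₁S, hx₁m⟩ x₂ ⟨hx₂S, hx₂m⟩
    by_contra hxy
    have hv : g x₂ = g x₁ := le_antisymm (hx₂m x₁ hx₁S) (hx₁m x₂ hx₂S)
    set v := g x₁ with hvdef
    set mid := (1/2 : ℝ) • x₁ + (1/2 : ℝ) • x₂ with hmid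
    have hmidS : mid ∈ S := hSconv hx₁S hx₂S (by norm_num) (by norm_num) (by norm_num)
    have hmid_le_i : ∀ i, gauge F (a i - mid) ≤ v := by
      intro i
      rw [hmid, hcomb (a i) x₁ x₂ (1/2) (1/2) (by norm_num)]
      calc gauge F ((1/2 : ℝ) • (a i - x₁) + (1/2 : ℝ) • (a i - x₂))
          ≤ (1/2) * gauge F (a i - x₁) + (1/2) * gauge F (a i - x₂) :=
            gauge_combo hFconv habs (by norm_num) (by norm_num)
        _ ≤ (1/2) * v + (1/2) * v :=
            add_le_add (mul_le_mul_of_nonneg_left (hgle x₁ i) (by norm_num))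
              (mul_le_mul_of_nonneg_left ((hgle x₂ i).trans hv.le) (by norm_num))
        _ = v := by ring
    have hmid_le : g mid ≤ v := hgle' _ _ hmid_le_i
    have hmid_ge : v ≤ g mid := hx₁m mid hmidS
    obtain ⟨i, hi⟩ := hgex mid
    have hiv : gauge F (a i - mid) = v := by
      rw [← hi]; exact le_antisymm hmid_le hmid_ge
    rcases eq_or_lt_of_le (hg0 x₁) with hv0 | hvpos
    · -- v = 0
      have h1 : gauge F (a i - x₁) = 0 :=
        le_antisymm ((hgle x₁ i).trans hv0.symm.le) (gauge_nonneg _)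
      have h2 : gauge F (a i - x₂) = 0 :=
        le_antisymm ((hgle x₂ i).trans (hv.trans hv0.symm).le) (gauge_nonneg _)
      have e1 : a i - x₁ = 0 := (gauge_eq_zero habs hvnb).mp h1
      have e2 : a i - x₂ = 0 := (gauge_eq_zero habs hvnb).mp h2
      apply hxy
      have : x₁ - x₂ = (a i - x₂) - (a i - x₁) := by abel
      rw [← sub_eq_zero, this, e1, e2, sub_zero]
    · -- 0 < v
      have hvne : v ≠ 0 := hvpos.ne'
      set u := v⁻¹ • (a i - x₁) with hu
      set w := v⁻¹ • (a i - x₂) with hw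
      have hmemF : ∀ z : X, gauge F z ≤ v → v⁻¹ • z ∈ F := by
        intro z hz
        have h1 : gauge F (v⁻¹ • z) ≤ 1 := by
          rw [gauge_smul_of_nonneg (inv_nonneg.mpr hvpos.le), smul_eq_mul]
          calc v⁻¹ * gauge F z ≤ v⁻¹ * v :=
              mul_le_mul_of_nonneg_left hz (inv_nonneg.mpr hvpos.le)
            _ = 1 := inv_mul_cancel₀ hvne
        have h2 := (gauge_le_one_iff_mem_closure hFconv hFnhds).mp h1
        rwa [hFc.closure_eq] at h2
      have huF : u ∈ F := hmemF _ (hgle x₁ i)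
      have hwF : w ∈ F := hmemF _ ((hgle x₂ i).trans hv.le)
      have huw : u ≠ w := by
        intro h
        apply hxy
        have h2 := congrArg (fun z => v • z) h
        simp only [hu, hw, smul_inv_smul₀ hvne] at h2
        exact sub_right_injective h2 |>.symm ▸ rfl
      have hint :=
        hFs huF hwF huw (by norm_num : (0:ℝ) < 1/2) (by norm_num : (0:ℝ) < 1/2) (by norm_num)
      have hlt : gauge F ((1/2 : ℝ) • u + (1/2 : ℝ) • w) < 1 :=
        (gauge_lt_one_iff_mem_interior hFconv hFnhds).mpr hint
      have heq : (1/2 : ℝ) • u + (1/2 : ℝ) • w = v⁻¹ • (a i - mid) := by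
        rw [hmid, hcomb (a i) x₁ x₂ (1/2) (1/2) (by norm_num), hu, hw, smul_add,
          smul_comm, smul_comm ((1/2 : ℝ))]
      rw [heq, gauge_smul_of_nonneg (inv_nonneg.mpr hvpos.le), smul_eq_mul, hiv,
        inv_mul_cancel₀ hvne] at hlt
      exact lt_irrefl 1 hlt
  refine ⟨huniq, ?_⟩
  rintro (⟨-, hrefl⟩ | hScompact)
  · -- reflexive case
    obtain ⟨r0, hr0⟩ := hFb.subset_closedBall 0
    set r := max r0 1 with hrdef
    have hr : (0 : ℝ) < r := lt_of_lt_of_le one_pos (le_max_right _ _)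
    have hFr : F ⊆ Metric.closedBall 0 r :=
      hr0.trans (Metric.closedBall_subset_closedBall (le_max_left _ _))
    set i₀ : Fin m := ⟨0, hm⟩ with hi₀
    have hcoer : ∀ x : X, ‖a i₀ - x‖ / r ≤ g x := fun x =>
      (le_gauge_of_subset_closedBall habs hr.le hFr).trans (hgle x i₀)
    obtain ⟨x₀, hx₀⟩ := hSne
    set R := r * g x₀ + ‖a i₀‖ + ‖x₀‖ with hRdef
    have hRx₀ : ‖x₀‖ ≤ R := by
      have h1 : 0 ≤ r * g x₀ := mul_nonneg hr.le (hg0 x₀)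
      have h2 : 0 ≤ ‖a i₀‖ := norm_nonneg _
      rw [hRdef]; linarith
    have hbound : ∀ x : X, g x ≤ g x₀ → ‖x‖ ≤ R := by
      intro x hx
      have h1 : ‖a i₀ - x‖ ≤ r * g x := by
        rw [← div_le_iff₀' hr] at *
        calc ‖a i₀ - x‖ / r ≤ g x := hcoer x
        _ = g x := rfl
      have h2 : ‖x‖ ≤ ‖a i₀‖ + ‖a i₀ - x‖ := by
        calc ‖x‖ = ‖a i₀ - (a i₀ - x)‖ := by rw [sub_sub_cancel]
        _ ≤ ‖a i₀‖ + ‖a i₀ - x‖ := norm_sub_le _ _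
      have h3 : r * g x ≤ r * g x₀ := mul_le_mul_of_nonneg_left hx hr.le
      have h4 : 0 ≤ ‖x₀‖ := norm_nonneg _
      rw [hRdef]; linarith
    set K := S ∩ Metric.closedBall 0 R with hKdef
    have hKmem : x₀ ∈ K := ⟨hx₀, mem_closedBall_zero_iff.mpr hRx₀⟩
    have hKc : IsClosed K := hSc.inter Metric.isClosed_closedBall
    have hKconv : Convex ℝ K := hSconv.inter (convex_closedBall 0 R)
    obtain ⟨x, hxK, hxmin⟩ := exists_minOn_reflexive hrefl ⟨x₀, hKmem⟩ hKc hKconv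
      Set.inter_subset_right hgcont hg0 hglev
    have hminS : ∀ y ∈ S, g x ≤ g y := by
      intro y hyS
      by_cases hy : g y < g x₀
      · exact hxmin y ⟨hyS, mem_closedBall_zero_iff.mpr (hbound y hy.le)⟩
      · exact (hxmin x₀ hKmem).trans (not_lt.mp hy)
    exact ⟨x, ⟨hxK.1, hminS⟩, fun y hy => huniq ⟨hy.1, hy.2⟩ ⟨hxK.1, hminS⟩⟩
  · -- compact case
    obtain ⟨x, hxS, hmin⟩ := hScompact.exists_isMinOn hSne hgcont.continuousOn
    have hminS : ∀ y ∈ S, g x ≤ g y := fun y hy => hmin hy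
    exact ⟨x, ⟨hxS, hminS⟩, fun y hy => huniq ⟨hy.1, hy.2⟩ ⟨hxS, hminS⟩⟩
end
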